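/- Every tree T with at least one edge satisfies χ_o(T) ≤ 3. -/

import Mathlib

open SimpleGraph

/-- The degree of a vertex, as the cardinality of its neighbor set. -/
noncomputable def deg {V : Type} (G : SimpleGraph V) (v : V) : ℕ := (G.neighborSet v).ncard

/-- `H` is a minor of `G`, via branch sets. -/
def IsMinor {W V : Type} (H : SimpleGraph W) (G : SimpleGraph V) : Prop :=
  ∃ B : W → Set V,
    (∀ w, (B w).Nonempty) ∧
    (∀ w, (G.induce (B w)).Connected) ∧
    (Pairwise fun w₁ w₂ => Disjoint (B w₁) (B w₂)) ∧
    (∀ w₁ w₂, H.Adj w₁ w₂ → ∃ v₁ ∈ B w₁, ∃ v₂ ∈ B w₂, G.Adj v₁ v₂)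

/-- A graph is planar iff it has no `K₅` and no `K₃,₃` minor (Wagner's theorem). -/
def IsPlanar {V : Type} (G : SimpleGraph V) : Prop :=
  ¬ IsMinor (completeGraph (Fin 5)) G ∧
  ¬ IsMinor (completeBipartiteGraph (Fin 3) (Fin 3)) G

/-- `G` has thickness at most `t`: its edge set partitions into `t` planar subgraphs. -/
def ThicknessLE {V : Type} (G : SimpleGraph V) (t : ℕ) : Prop :=
  ∃ c : Sym2 V → Fin t, ∀ i : Fin t,
    IsPlanar (SimpleGraph.fromEdgeSet {e | e ∈ G.edgeSet ∧ c e = i})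

/-- The thickness of a graph. -/
noncomputable def thickness {V : Type} (G : SimpleGraph V) : ℕ :=
  sInf {t | ThicknessLE G t}

/-- `φ` is an odd coloring of `G` with `k` colors. -/
def IsOddColoring {V : Type} (G : SimpleGraph V) {k : ℕ} (φ : V → Fin k) : Prop :=
  (∀ ⦃u v⦄, G.Adj u v → φ u ≠ φ v) ∧
  ∀ v : V, (G.neighborSet v).Nonempty →
    ∃ c : Fin k, Odd ({u | u ∈ G.neighborSet v ∧ φ u = c}.ncard)

/-- The odd chromatic number of `G`. -/
noncomputable def oddChrom {V : Type} (G : SimpleGraph V) : ℕ :=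
  sInf {k | ∃ φ : V → Fin k, IsOddColoring G φ}

/-- `G` is odd `k⁺`-critical. -/
def OddCritical {V : Type} (G : SimpleGraph V) (k : ℕ) : Prop :=
  k ≤ oddChrom G ∧ ∀ H : G.Subgraph, H ≠ ⊤ → oddChrom H.coe < k

/-- A vertex is `n`-easy if its degree is odd or it has a neighbor of degree `2i`, `1 ≤ i ≤ n`. -/
def NEasy {V : Type} (G : SimpleGraph V) (n : ℕ) (v : V) : Prop :=
  Odd (deg G v) ∨ ∃ u ∈ G.neighborSet v, ∃ i, 1 ≤ i ∧ i ≤ n ∧ deg G u = 2 * i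


section OddTreeAux

variable {V : Type} {G : SimpleGraph V}

/-- The unique path from `r` to `v` in a tree. -/
noncomputable def pathTo (hT : G.IsTree) (r v : V) : G.Walk r v :=
  (hT.existsUnique_path r v).choose

lemma pathTo_isPath (hT : G.IsTree) (r v : V) : (pathTo hT r v).IsPath :=
  (hT.existsUnique_path r v).choose_spec.1

lemma eq_pathTo (hT : G.IsTree) {r v : V} (q : G.Walk r v) (hq : q.IsPath) :
    q = pathTo hT r v :=
  (hT.existsUnique_path r v).choose_spec.2 q hq

/-- Depth of `v` in the tree rooted at `r`. -/
noncomputable def tdepth (hT : G.IsTree) (r v : V) : ℕ := (pathTo hT r v).length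

lemma tdepth_eq_zero (hT : G.IsTree) {r v : V} (h : tdepth hT r v = 0) : v = r :=
  (SimpleGraph.Walk.eq_of_length_eq_zero h).symm

/-- Adjacent vertices have depths differing by exactly one. -/
lemma tdepth_step (hT : G.IsTree) (r : V) {u v : V} (hadj : G.Adj u v) :
    tdepth hT r v = tdepth hT r u + 1 ∨ tdepth hT r u = tdepth hT r v + 1 := by
  classical
  set p := pathTo hT r u with hp
  by_cases hv : v ∈ p.support
  · right
    have hdrop : (p.dropUntil v hv).IsPath := (pathTo_isPath hT r u).dropUntil hv
    have hedge : (SimpleGraph.Walk.cons hadj.symm SimpleGraph.Walk.nil : G.Walk v u).IsPath := by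
      simp [SimpleGraph.Walk.isPath_def, hadj.ne']
    -- both are paths from v to u, so equal
    have huniq := (hT.existsUnique_path v u).choose_spec.2
    have h1 : p.dropUntil v hv = (hT.existsUnique_path v u).choose := huniq _ hdrop
    have h2 : (SimpleGraph.Walk.cons hadj.symm SimpleGraph.Walk.nil : G.Walk v u) =
        (hT.existsUnique_path v u).choose := huniq _ hedge
    have hlen : (p.dropUntil v hv).length = 1 := by
      rw [h1, ← h2]; simp
    have htake : (p.takeUntil v hv).IsPath := (pathTo_isPath hT r u).takeUntil hv
    have heq : p.takeUntil v hv = pathTo hT r v := eq_pathTo hT _ htake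
    have hspec := congrArg SimpleGraph.Walk.length (p.take_spec hv)
    rw [SimpleGraph.Walk.length_append, heq, hlen] at hspec
    simpa [tdepth] using hspec.symm
  · left
    have hcat : (p.concat hadj).IsPath := by
      rw [← SimpleGraph.Walk.isPath_reverse_iff, SimpleGraph.Walk.reverse_concat]
      refine SimpleGraph.Walk.IsPath.cons ((pathTo_isPath hT r u).reverse) ?_
      simpa [SimpleGraph.Walk.support_reverse] using hv
    have heq : p.concat hadj = pathTo hT r v := eq_pathTo hT _ hcat
    have := congrArg SimpleGraph.Walk.length heq
    rw [SimpleGraph.Walk.length_concat] at this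
    simpa [tdepth] using this.symm

/-- The parent of a vertex is unique. -/
lemma parent_unique (hT : G.IsTree) (r : V) {u₁ u₂ v : V}
    (h₁ : G.Adj u₁ v) (h₂ : G.Adj u₂ v)
    (hd₁ : tdepth hT r u₁ + 1 = tdepth hT r v)
    (hd₂ : tdepth hT r u₂ + 1 = tdepth hT r v) : u₁ = u₂ := by
  classical
  have key : ∀ (u : V) (h : G.Adj u v), tdepth hT r u + 1 = tdepth hT r v →
      ∃ hv : v ∉ (pathTo hT r u).support, True := by
    intro u h hd
    refine ⟨fun hv => ?_, trivial⟩
    have htake : ((pathTo hT r u).takeUntil v hv).IsPath :=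
      (pathTo_isPath hT r u).takeUntil hv
    have heq : (pathTo hT r u).takeUntil v hv = pathTo hT r v := eq_pathTo hT _ htake
    have hle := (pathTo hT r u).length_takeUntil_le hv
    rw [heq] at hle
    change tdepth hT r v ≤ tdepth hT r u at hle
    omega
  obtain ⟨hv₁, -⟩ := key u₁ h₁ hd₁
  obtain ⟨hv₂, -⟩ := key u₂ h₂ hd₂
  have hcat : ∀ (u : V) (h : G.Adj u v) (hv : v ∉ (pathTo hT r u).support),
      ((pathTo hT r u).concat h).IsPath := by
    intro u h hv
    rw [← SimpleGraph.Walk.isPath_reverse_iff, SimpleGraph.Walk.reverse_concat]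
    refine SimpleGraph.Walk.IsPath.cons ((pathTo_isPath hT r u).reverse) ?_
    simpa [SimpleGraph.Walk.support_reverse] using hv
  have e₁ : (pathTo hT r u₁).concat h₁ = pathTo hT r v := eq_pathTo hT _ (hcat u₁ h₁ hv₁)
  have e₂ : (pathTo hT r u₂).concat h₂ = pathTo hT r v := eq_pathTo hT _ (hcat u₂ h₂ hv₂)
  obtain ⟨hveq, -⟩ := SimpleGraph.Walk.concat_inj (e₁.trans e₂.symm)
  exact hveq

/-- Every non-root vertex has a parent. -/
lemma parent_exists (hT : G.IsTree) (r : V) {v : V} (hv : v ≠ r) :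
    ∃ u, G.Adj u v ∧ tdepth hT r u + 1 = tdepth hT r v := by
  classical
  obtain ⟨w, h, q, hq⟩ := SimpleGraph.Walk.exists_eq_cons_of_ne hv
    (pathTo hT r v).reverse
  refine ⟨w, h.symm, ?_⟩
  have hp : pathTo hT r v = q.reverse.concat h.symm := by
    have := congrArg SimpleGraph.Walk.reverse hq
    rwa [SimpleGraph.Walk.reverse_reverse, SimpleGraph.Walk.reverse_cons] at this
  have hqpath : q.reverse.IsPath := by
    have : (pathTo hT r v).IsPath := pathTo_isPath hT r v
    rw [hp] at this
    rw [← SimpleGraph.Walk.isPath_reverse_iff] at this ⊢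
    rw [SimpleGraph.Walk.reverse_concat] at this
    rw [SimpleGraph.Walk.reverse_reverse]
    rw [SimpleGraph.Walk.reverse_reverse] at this
    exact this.of_cons
  have heq : q.reverse = pathTo hT r w := eq_pathTo hT _ hqpath
  have := congrArg SimpleGraph.Walk.length hp
  rw [SimpleGraph.Walk.length_concat, heq] at this
  simpa [tdepth] using this.symm

open Fin.NatCast in
lemma fin3_cast_eq_iff (a b : ℕ) : (a : Fin 3) = (b : Fin 3) ↔ a % 3 = b % 3 := by
  rw [Fin.ext_iff, Fin.val_natCast, Fin.val_natCast]

end OddTreeAux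


open Fin.NatCast in
/-- Every tree with at least one edge has odd chromatic number at most 3. -/
theorem oddChrom_tree_le_three {V : Type} [Fintype V] (G : SimpleGraph V)
    (hT : G.IsTree) (hE : G.edgeSet.Nonempty) :
    oddChrom G ≤ 3 := by
  classical
  obtain ⟨e, he⟩ := hE
  induction e using Sym2.ind with
  | _ a b =>
  rw [SimpleGraph.mem_edgeSet] at he
  -- depth of `b` from `a` is 1, depth of `a` from `a` is 0
  have hedge : (SimpleGraph.Walk.cons he SimpleGraph.Walk.nil : G.Walk a b).IsPath := by
    simp [SimpleGraph.Walk.isPath_def, he.ne]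
  have hdb : tdepth hT a b = 1 := by
    have h1 := congrArg SimpleGraph.Walk.length (eq_pathTo hT _ hedge)
    simpa [tdepth] using h1.symm
  have hda : tdepth hT a a = 0 := by
    have h1 := congrArg SimpleGraph.Walk.length
      (eq_pathTo hT (SimpleGraph.Walk.nil : G.Walk a a) SimpleGraph.Walk.IsPath.nil)
    simpa [tdepth] using h1.symm
  -- pick a vertex `r` of maximal depth from `a`: it is a leaf
  obtain ⟨r, -, hr⟩ := Finset.exists_max_image Finset.univ (tdepth hT a) ⟨a, Finset.mem_univ a⟩
  have hrb : 1 ≤ tdepth hT a r := hdb ▸ hr b (Finset.mem_univ b)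
  have hrne : r ≠ a := by
    intro h; rw [h, hda] at hrb; omega
  obtain ⟨u₀, hu₀adj, hu₀d⟩ := parent_exists hT a hrne
  have hN : G.neighborSet r = {u₀} := by
    ext w
    simp only [SimpleGraph.mem_neighborSet, Set.mem_singleton_iff]
    constructor
    · intro hw
      rcases tdepth_step hT a hw with h1 | h2
      · exact absurd (hr w (Finset.mem_univ w)) (by omega)
      · exact parent_unique hT a hw.symm hu₀adj (by omega) hu₀d
    · rintro rfl; exact hu₀adj.symm
  -- the coloring: depth from the leaf `r`, mod 3
  set φ : V → Fin 3 := fun v => (tdepth hT r v : Fin 3) with hφ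
  have hφv : ∀ v, φ v = (tdepth hT r v : Fin 3) := fun v => rfl
  have hproper : ∀ ⦃x y⦄, G.Adj x y → φ x ≠ φ y := by
    intro x y hxy hc
    rw [hφv, hφv, fin3_cast_eq_iff] at hc
    rcases tdepth_step hT r hxy with h | h <;> omega
  have hmem : (3 : ℕ) ∈ {k | ∃ ψ : V → Fin k, IsOddColoring G ψ} := by
    refine ⟨φ, hproper, ?_⟩
    intro v _
    by_cases hvr : v = r
    · subst hvr
      refine ⟨φ u₀, ?_⟩
      have hset : {w | w ∈ G.neighborSet v ∧ φ w = φ u₀} = {u₀} := by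
        ext w
        simp only [Set.mem_setOf_eq, hN, Set.mem_singleton_iff]
        exact ⟨fun h => h.1, fun h => ⟨h, by rw [h]⟩⟩
      rw [hset, Set.ncard_singleton]
      exact odd_one
    · obtain ⟨u, huadj, hud⟩ := parent_exists hT r hvr
      refine ⟨(tdepth hT r u : Fin 3), ?_⟩
      have hset : {w | w ∈ G.neighborSet v ∧ φ w = (tdepth hT r u : Fin 3)} = {u} := by
        ext w
        simp only [Set.mem_setOf_eq, SimpleGraph.mem_neighborSet, Set.mem_singleton_iff]
        constructor
        · rintro ⟨hw, hc⟩
          rw [hφv, fin3_cast_eq_iff] at hc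
          rcases tdepth_step hT r hw with h | h
          · exfalso; omega
          · exact parent_unique hT r hw.symm huadj (by omega) hud
        · rintro rfl
          exact ⟨huadj.symm, rfl⟩
      rw [hset, Set.ncard_singleton]
      exact odd_one
  exact Nat.sInf_le hmem
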